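/- Let G be a finite simple graph on vertex set {1,…,n}, let α be an acyclic orientation of G, and let σ be a linear extension of the poset P_α. Then performing inflips successively at the vertices σ(1), σ(2), …, σ(n) is well-defined (at each step the vertex to be inflipped is a source of the current acyclic orientation) and the resulting acyclic orientation after these n inflips is again α. -/
import Mathlib


open SimpleGraph

/-- An acyclic orientation of a simple graph `G`: a choice of direction `toRel` for every edge
of `G` with no directed cycles. -/
structure AcyclicOrientation {V : Type*} (G : SimpleGraph V) where
  toRel : V → V → Prop
  adj_of_rel : ∀ a b, toRel a b → G.Adj a b
  rel_total : ∀ a b, G.Adj a b → toRel a b ∨ toRel b a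
  asymm : ∀ a b, toRel a b → ¬ toRel b a
  acyclic : ∀ v, ¬ Relation.TransGen toRel v v

/-- `v` is a source: it has no incoming edges (isolated vertices are permitted). -/
def AcyclicOrientation.IsSource {V : Type*} {G : SimpleGraph V}
    (α : AcyclicOrientation G) (v : V) : Prop :=
  ∀ u, ¬ α.toRel u v

/-- `v` is a sink: it has no outgoing edges (isolated vertices are permitted). -/
def AcyclicOrientation.IsSink {V : Type*} {G : SimpleGraph V}
    (α : AcyclicOrientation G) (v : V) : Prop :=
  ∀ u, ¬ α.toRel v u

/-- `α'` is obtained from `α` by an inflip at `v`: the source `v` is converted into a sink by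
reversing the directions of all its incident edges. -/
def IsInflipAt {V : Type*} {G : SimpleGraph V} (v : V) (α α' : AcyclicOrientation G) : Prop :=
  α.IsSource v ∧
    ∀ a b, (α'.toRel a b ↔ (a ≠ v ∧ b ≠ v ∧ α.toRel a b) ∨ (b = v ∧ α.toRel b a))

/-- `α'` is obtained from `α` by an outflip at `v`: the sink `v` is converted into a source by
reversing the directions of all its incident edges. -/
def IsOutflipAt {V : Type*} {G : SimpleGraph V} (v : V) (α α' : AcyclicOrientation G) : Prop :=
  α.IsSink v ∧
    ∀ a b, (α'.toRel a b ↔ (a ≠ v ∧ b ≠ v ∧ α.toRel a b) ∨ (a = v ∧ α.toRel b a))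

/-- `α'` is obtained from `α` by an inflip (at some source). -/
def IsInflip {V : Type*} {G : SimpleGraph V} (α α' : AcyclicOrientation G) : Prop :=
  ∃ v, IsInflipAt v α α'

/-- `α'` is obtained from `α` by an outflip (at some sink). -/
def IsOutflip {V : Type*} {G : SimpleGraph V} (α α' : AcyclicOrientation G) : Prop :=
  ∃ v, IsOutflipAt v α α'

/-- A flip is an inflip or an outflip. -/
def IsFlip {V : Type*} {G : SimpleGraph V} (α α' : AcyclicOrientation G) : Prop :=
  IsInflip α α' ∨ IsOutflip α α'

/-- Flip equivalence: `α ∼ α'` iff one can be obtained from the other by a sequence of flips. -/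
def FlipEquiv {V : Type*} {G : SimpleGraph V} (α α' : AcyclicOrientation G) : Prop :=
  Relation.ReflTransGen IsFlip α α'

theorem AcyclicOrientation.ext' {V : Type*} {G : SimpleGraph V}
    {α β : AcyclicOrientation G} (h : α.toRel = β.toRel) : α = β := by
  cases α; cases β; cases h; rfl

def relAt {n : ℕ} {G : SimpleGraph (Fin n)} (α : AcyclicOrientation G)
    (σ : Equiv.Perm (Fin n)) (k : ℕ) (x y : Fin n) : Prop :=
  (α.toRel x y ∧ ¬((σ.symm x : ℕ) < k ∧ k ≤ (σ.symm y : ℕ))) ∨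
  (α.toRel y x ∧ (σ.symm y : ℕ) < k ∧ k ≤ (σ.symm x : ℕ))

def orientAt {n : ℕ} {G : SimpleGraph (Fin n)} (α : AcyclicOrientation G)
    (σ : Equiv.Perm (Fin n))
    (key : ∀ x y, α.toRel x y → (σ.symm x : ℕ) < (σ.symm y : ℕ))
    (k : ℕ) : AcyclicOrientation G where
  toRel := relAt α σ k
  adj_of_rel := by
    intro a b h
    rcases h with ⟨h, -⟩ | ⟨h, -⟩
    · exact α.adj_of_rel a b h
    · exact (α.adj_of_rel b a h).symm
  rel_total := by
    intro a b h
    rcases α.rel_total a b h with h | h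
    · by_cases hc : ((σ.symm a : ℕ) < k ∧ k ≤ (σ.symm b : ℕ))
      · exact Or.inr (Or.inr ⟨h, hc⟩)
      · exact Or.inl (Or.inl ⟨h, hc⟩)
    · by_cases hc : ((σ.symm b : ℕ) < k ∧ k ≤ (σ.symm a : ℕ))
      · exact Or.inl (Or.inr ⟨h, hc⟩)
      · exact Or.inr (Or.inl ⟨h, hc⟩)
  asymm := by
    intro a b h h'
    rcases h with ⟨h, hc⟩ | ⟨h, hc⟩ <;> rcases h' with ⟨h', hc'⟩ | ⟨h', hc'⟩
    · exact α.asymm a b h h'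
    · exact hc hc'
    · exact hc' hc
    · exact α.asymm a b h' h
  acyclic := by
    intro v hv
    set g : Fin n → ℕ := fun x =>
      if (σ.symm x : ℕ) < k then (σ.symm x : ℕ) + n else (σ.symm x : ℕ) with hg
    have step : ∀ a b, relAt α σ k a b → g a < g b := by
      intro a b h
      have ha : (σ.symm a : ℕ) < n := (σ.symm a).is_lt
      have hb : (σ.symm b : ℕ) < n := (σ.symm b).is_lt
      rcases h with ⟨h, hc⟩ | ⟨h, hc⟩
      · have := key a b h
        simp only [hg]
        split_ifs <;> omega
      · have := key b a h
        simp only [hg]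
        split_ifs <;> omega
    have mono : ∀ a b, Relation.TransGen (relAt α σ k) a b → g a < g b := by
      intro a b h
      induction h with
      | single h => exact step _ _ h
      | tail _ h₂ ih => exact lt_trans ih (step _ _ h₂)
    exact lt_irrefl _ (mono v v hv)

/-- If `σ` is a linear extension of the poset `P_α` of an acyclic orientation
`α` of a graph `G` on `{1, …, n}`, then performing inflips successively at
`σ 0, σ 1, …, σ (n - 1)` is well-defined (at each step the vertex to be inflipped is a source
of the current orientation) and the resulting acyclic orientation after these `n` inflips is
again `α`. -/
theorem inflips_along_linear_extension (n : ℕ) (G : SimpleGraph (Fin n))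
    (α : AcyclicOrientation G) (σ : Equiv.Perm (Fin n))
    (hσ : ∀ i j : Fin n, Relation.ReflTransGen α.toRel i j → σ.symm i ≤ σ.symm j) :
    ∃ f : ℕ → AcyclicOrientation G, f 0 = α ∧ f n = α ∧
      ∀ i : Fin n, IsInflipAt (σ i) (f i.val) (f (i.val + 1)) := by
  have key : ∀ x y, α.toRel x y → (σ.symm x : ℕ) < (σ.symm y : ℕ) := by
    intro x y h
    have hle : σ.symm x ≤ σ.symm y := hσ x y (Relation.ReflTransGen.single h)
    have hne : σ.symm x ≠ σ.symm y := by
      intro e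
      exact α.asymm x y h (by rw [σ.symm.injective e] at h ⊢; exact h)
    have h2 : σ.symm x < σ.symm y := lt_of_le_of_ne hle hne
    exact h2
  refine ⟨fun k => orientAt α σ key k, ?_, ?_, ?_⟩
  · apply AcyclicOrientation.ext'
    funext x y
    apply propext
    simp [orientAt, relAt]
  · apply AcyclicOrientation.ext'
    funext x y
    apply propext
    have hx := (σ.symm x).is_lt
    have hy := (σ.symm y).is_lt
    simp only [orientAt, relAt]
    constructor
    · rintro (⟨h, -⟩ | ⟨-, -, hc⟩)
      · exact h
      · omega
    · intro h
      exact Or.inl ⟨h, by omega⟩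
  · intro i
    have hv : ∀ x : Fin n, (x = σ i) ↔ (σ.symm x : ℕ) = i.val := by
      intro x
      rw [← (Equiv.symm_apply_eq σ), Fin.ext_iff]
    constructor
    · intro u hu
      rcases hu with ⟨h, hc⟩ | ⟨h, hc1, hc2⟩
      · have hlt := key u (σ i) h
        rw [Equiv.symm_apply_apply] at hlt
        exact hc ⟨hlt, by rw [Equiv.symm_apply_apply]⟩
      · rw [Equiv.symm_apply_apply] at hc1
        omega
    · intro a b
      have hva := hv a
      have hvb := hv b
      by_cases hA : α.toRel a b <;> by_cases hB : α.toRel b a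
      · exact absurd hB (α.asymm a b hA)
      · have h1 := key a b hA
        simp only [orientAt, relAt, hA, hB, hva, hvb, ne_eq, true_and, and_true,
          false_and, and_false, false_or, or_false]
        omega
      · have h1 := key b a hB
        simp only [orientAt, relAt, hA, hB, hva, hvb, ne_eq, true_and, and_true,
          false_and, and_false, false_or, or_false]
        omega
      · simp only [orientAt, relAt, hA, hB, hva, hvb, ne_eq, false_and, and_false,
          false_or, or_false, or_self]
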